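/- Let Q = (A, B, C) be a primitive positive definite binary quadratic form with discriminant -4m that represents a square a^2 with gcd(a, 4m) = 1, say Q(x0,y0) = a^2 with gcd(x0,y0)=1. Then Q is SL_2(Z)-equivalent to a form whose first coefficient is a^2, and there exists a primitive form Q1 = (n, B', n·C') with n^2 = a^2 (n > 0) such that the Dirichlet composition of Q1 with itself is equivalent to Q. -/

import Mathlib

/-- A primitive positive definite form Q = (A,B,C) of discriminant -4m
that primitively represents a square a² with gcd(a,4m) = 1 is
SL₂(ℤ)-equivalent to a form with first coefficient a², and there is a
primitive form Q1 = (n, B', n·C') with n² = a², n > 0, whose Dirichlet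
composition with itself, namely (n², B', C'), is equivalent to Q. -/
theorem stmt_5 (A B C m a x0 y0 : ℤ)
    (hprim : Int.gcd A (Int.gcd B C) = 1)
    (hApos : 0 < A) (hmpos : 0 < m)
    (hdisc : B ^ 2 - 4 * A * C = -4 * m)
    (hrep : A * x0 ^ 2 + B * x0 * y0 + C * y0 ^ 2 = a ^ 2)
    (hxy : IsCoprime x0 y0)
    (ha : Int.gcd a (4 * m) = 1) :
    (∃ r s t u B' C' : ℤ, r * u - s * t = 1 ∧
      ∀ x y : ℤ,
        A * (r * x + s * y) ^ 2 + B * (r * x + s * y) * (t * x + u * y)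
          + C * (t * x + u * y) ^ 2
        = a ^ 2 * x ^ 2 + B' * x * y + C' * y ^ 2) ∧
    (∃ n B' C' : ℤ, 0 < n ∧ n ^ 2 = a ^ 2 ∧
      Int.gcd n (Int.gcd B' (n * C')) = 1 ∧
      ∃ r s t u : ℤ, r * u - s * t = 1 ∧
        ∀ x y : ℤ,
          n ^ 2 * (r * x + s * y) ^ 2
            + B' * (r * x + s * y) * (t * x + u * y)
            + C' * (t * x + u * y) ^ 2
          = A * x ^ 2 + B * x * y + C * y ^ 2) := by
  obtain ⟨a', b', hab⟩ := hxy
  set u : ℤ := a' with hu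
  set s : ℤ := -b' with hs
  have hdet : x0 * u - s * y0 = 1 := by simp only [hu, hs]; linarith [hab]
  set B1 : ℤ := 2 * A * x0 * s + B * (x0 * u + s * y0) + 2 * C * y0 * u with hB1
  set C1 : ℤ := A * s ^ 2 + B * s * u + C * u ^ 2 with hC1
  have h1 : ∀ x y : ℤ,
      A * (x0 * x + s * y) ^ 2 + B * (x0 * x + s * y) * (y0 * x + u * y)
        + C * (y0 * x + u * y) ^ 2
      = a ^ 2 * x ^ 2 + B1 * x * y + C1 * y ^ 2 := by
    intro x y
    simp only [hB1, hC1]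
    linear_combination x ^ 2 * hrep
  have hD : B1 ^ 2 - 4 * a ^ 2 * C1 = -4 * m := by
    simp only [hB1, hC1]
    linear_combination (B ^ 2 - 4 * A * C) * (x0 * u - s * y0 + 1) * hdet + hdisc
      + 4 * (A * s ^ 2 + B * s * u + C * u ^ 2) * hrep
  have ha0 : a ≠ 0 := by
    rintro rfl
    simp [Int.gcd] at ha
    omega
  refine ⟨⟨x0, s, y0, u, B1, C1, hdet, h1⟩, |a|, B1, C1, abs_pos.mpr ha0, sq_abs a, ?_, ?_⟩
  · -- primitivity of (|a|, B1, |a| * C1)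
    set g : ℕ := Int.gcd |a| (Int.gcd B1 (|a| * C1)) with hg
    have hga : (g : ℤ) ∣ a :=
      (dvd_abs _ _).mp (Int.gcd_dvd_left _ _)
    have hgB : (g : ℤ) ∣ B1 :=
      dvd_trans (Int.gcd_dvd_right _ _) (Int.gcd_dvd_left _ _)
    have hg4m : (g : ℤ) ∣ 4 * m := by
      have h4m : 4 * m = 4 * a ^ 2 * C1 - B1 ^ 2 := by linarith
      rw [h4m]
      exact dvd_sub (dvd_mul_of_dvd_left ((dvd_pow hga (by norm_num)).mul_left 4) C1)
        (dvd_pow hgB (by norm_num))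
    have hfin : (g : ℤ) ∣ (Int.gcd a (4 * m) : ℤ) := by exact_mod_cast Int.dvd_gcd hga hg4m
    rw [ha] at hfin
    exact Nat.eq_one_of_dvd_one (Int.ofNat_dvd.mp (by exact_mod_cast hfin))
  · refine ⟨u, -s, -y0, x0, by linarith [hdet], ?_⟩
    intro x y
    have hn : |a| ^ 2 = a ^ 2 := sq_abs a
    linear_combination (u * x + -s * y) ^ 2 * hn
      + (x0 * u - s * y0 + 1) * (A * x ^ 2 + B * x * y + C * y ^ 2) * hdet
      - (u * x + -s * y) ^ 2 * hrep
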